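/- Let A be a commutative ℝ-algebra, Q : A → A an ℝ-linear map, and c, v₁, v₂, v₃, v₄ ∈ A. In the ring B = A[ε₁,ε₂,ε₃,ε₄]/(ε₁², ε₂², ε₃², ε₄²), set v = ε₁v₁ + ε₂v₂ + ε₃v₃ + ε₄v₄ (extending Q coefficientwise to B). Then there exists a unique u ∈ B lying in the ideal generated by (ε₁,ε₂,ε₃,ε₄) satisfying the fixed-point equation u = v − Q(c·u⁴), and the coefficient of ε₁ε₂ε₃ε₄ in u equals −24·Q(c·v₁v₂v₃v₄). -/
import Mathlib


open MvPolynomial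

/-- The coefficientwise extension of an `ℝ`-linear map `Q : A → A` to polynomials in the
nilpotent parameters `ε₁, ε₂, ε₃, ε₄`. -/
noncomputable def Qext {A : Type*} [CommRing A] [Algebra ℝ A] (Q : A →ₗ[ℝ] A)
    (p : MvPolynomial (Fin 4) A) : MvPolynomial (Fin 4) A :=
  ∑ m ∈ p.support, monomial m (Q (coeff m p))

namespace QFPAux

noncomputable def sgl (i : Fin 4) : Fin 4 →₀ ℕ := Finsupp.single i 1
noncomputable def F4 : Fin 4 →₀ ℕ := sgl 0 + sgl 1 + sgl 2 + sgl 3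
def deg (m : Fin 4 →₀ ℕ) : ℕ := ∑ i, m i

lemma deg_add (m n : Fin 4 →₀ ℕ) : deg (m + n) = deg m + deg n := by
  simp [deg, Finset.sum_add_distrib]

lemma deg_zero : deg (0 : Fin 4 →₀ ℕ) = 0 := by simp [deg]

lemma deg_eq_zero {m : Fin 4 →₀ ℕ} (h : deg m = 0) : m = 0 := by
  have := fun i => Finset.sum_eq_zero_iff.mp h i (Finset.mem_univ i)
  ext i; simp [this i]

lemma F4_apply (j : Fin 4) : F4 j = 1 := by
  fin_cases j <;> simp [F4, sgl, Finsupp.single_apply]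

lemma sgl_apply (i j : Fin 4) : sgl i j = if i = j then 1 else 0 := Finsupp.single_apply

lemma deg_sgl (i : Fin 4) : deg (sgl i) = 1 := by
  fin_cases i <;> simp [deg, sgl, Finsupp.single_apply, Fin.sum_univ_four]

lemma deg_F4 : deg F4 = 4 := by
  simp [deg, F4_apply, Fin.sum_univ_four]

lemma sgl_ne_zero (i : Fin 4) : sgl i ≠ 0 := by simp [sgl]

lemma sgl_ne_F4 (i : Fin 4) : sgl i ≠ F4 := fun h => by
  have := congrArg deg h; rw [deg_sgl, deg_F4] at this; omega

lemma F4_ne_zero : F4 ≠ 0 := fun h => by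
  have := congrArg deg h; rw [deg_F4, deg_zero] at this; omega

lemma sgl_eq_sgl {i j : Fin 4} : sgl i = sgl j ↔ i = j :=
  Finsupp.single_left_inj one_ne_zero

lemma SF_deg_le {m : Fin 4 →₀ ℕ} (h : ∀ i, m i ≤ 1) : deg m ≤ 4 := by
  have := h 0; have := h 1; have := h 2; have := h 3
  simp only [deg, Fin.sum_univ_four]; omega

lemma deg_one_eq_sgl {m : Fin 4 →₀ ℕ} (h : deg m = 1) : ∃ i, m = sgl i := by
  simp only [deg, Fin.sum_univ_four] at h
  have h0 : m 0 = 1 ∨ m 1 = 1 ∨ m 2 = 1 ∨ m 3 = 1 := by omega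
  have key : ∀ i : Fin 4, m i = 1 → m = sgl i := by
    intro i hi
    ext j
    rw [sgl_apply]
    fin_cases i <;> fin_cases j <;> simp_all <;> omega
  rcases h0 with h'|h'|h'|h'
  exacts [⟨0, key 0 h'⟩, ⟨1, key 1 h'⟩, ⟨2, key 2 h'⟩, ⟨3, key 3 h'⟩]

lemma SF_deg_four {m : Fin 4 →₀ ℕ} (h : ∀ i, m i ≤ 1) (h4 : deg m = 4) : m = F4 := by
  have := h 0; have := h 1; have := h 2; have := h 3
  simp only [deg, Fin.sum_univ_four] at h4
  have hj : m 0 = 1 ∧ m 1 = 1 ∧ m 2 = 1 ∧ m 3 = 1 := by omega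
  ext j; rw [F4_apply]
  fin_cases j
  exacts [hj.1, hj.2.1, hj.2.2.1, hj.2.2.2]

variable {A : Type*} [CommRing A] [Algebra ℝ A]

lemma coeff_Qext (Q : A →ₗ[ℝ] A) (p : MvPolynomial (Fin 4) A) (m : Fin 4 →₀ ℕ) :
    coeff m (Qext Q p) = Q (coeff m p) := by
  classical
  rw [Qext, coeff_sum]
  simp only [coeff_monomial]
  rw [Finset.sum_ite_eq' p.support m (fun m' => Q (coeff m' p))]
  by_cases h : m ∈ p.support
  · simp [h]
  · simp [h, MvPolynomial.notMem_support_iff.mp h]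

lemma mem_span_sq_iff (p : MvPolynomial (Fin 4) A) :
    p ∈ Ideal.span (Set.range fun i : Fin 4 => (X i : MvPolynomial (Fin 4) A) ^ 2) ↔
      ∀ m : Fin 4 →₀ ℕ, (∀ i, m i ≤ 1) → coeff m p = 0 := by
  classical
  constructor
  · intro hp m hm
    rw [Ideal.span, Submodule.mem_span_range_iff_exists_fun] at hp
    obtain ⟨g, hg⟩ := hp
    rw [← hg]
    rw [show (∑ i : Fin 4, g i • (X i : MvPolynomial (Fin 4) A) ^ 2)
        = ∑ i : Fin 4, g i * monomial (Finsupp.single i 2) 1 by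
      simp [smul_eq_mul, X_pow_eq_monomial]]
    rw [coeff_sum]
    refine Finset.sum_eq_zero fun i _ => ?_
    rw [coeff_mul_monomial']
    rw [if_neg]
    intro hle
    have := (Finsupp.single_le_iff).mp hle
    exact absurd (le_trans this (hm i)) (by omega)
  · intro h
    rw [show p = ∑ m ∈ p.support, monomial m (coeff m p) from (support_sum_monomial_coeff p).symm]
    refine Ideal.sum_mem _ fun m hm => ?_
    by_cases hsf : ∀ i, m i ≤ 1
    · simp [h m hsf]
    · push_neg at hsf
      obtain ⟨i, hi⟩ := hsf
      have hle : Finsupp.single i 2 ≤ m := Finsupp.single_le_iff.mpr (by omega)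
      have : monomial m (coeff m p) = monomial (m - Finsupp.single i 2) (coeff m p) * X i ^ 2 := by
        rw [show ((X i : MvPolynomial (Fin 4) A) ^ 2) = monomial (Finsupp.single i 2) 1 by
          rw [X_pow_eq_monomial]]
        rw [monomial_mul, mul_one, tsub_add_cancel_of_le hle]
      rw [this]
      exact Ideal.mul_mem_left _ _ (Ideal.subset_span ⟨i, rfl⟩)

/-- squarefree linear polynomial with coefficients `a`. -/
noncomputable def Lf (a : Fin 4 → A) : MvPolynomial (Fin 4) A :=
  monomial (sgl 0) (a 0) + monomial (sgl 1) (a 1) + monomial (sgl 2) (a 2) + monomial (sgl 3) (a 3)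

lemma coeff_Lf (a : Fin 4 → A) (m : Fin 4 →₀ ℕ) :
    coeff m (Lf a) = (if sgl 0 = m then a 0 else 0) + (if sgl 1 = m then a 1 else 0)
      + (if sgl 2 = m then a 2 else 0) + (if sgl 3 = m then a 3 else 0) := by
  simp [Lf, coeff_monomial]

lemma coeff_sgl_Lf (a : Fin 4 → A) (j : Fin 4) : coeff (sgl j) (Lf a) = a j := by
  rw [coeff_Lf]
  fin_cases j <;> simp [sgl_eq_sgl] <;> decide

lemma coeff_Lf_of_deg_ne_one (a : Fin 4 → A) {m : Fin 4 →₀ ℕ} (h : deg m ≠ 1) :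
    coeff m (Lf a) = 0 := by
  rw [coeff_Lf]
  have : ∀ i : Fin 4, ¬ (sgl i = m) := fun i hh => h (hh ▸ deg_sgl i)
  simp [this]

/-- minimal degree bound predicate -/
def mdg (d : ℕ) (p : MvPolynomial (Fin 4) A) : Prop := ∀ m, deg m < d → coeff m p = 0

lemma mdg_mul {d₁ d₂ : ℕ} {p q : MvPolynomial (Fin 4) A} (hp : mdg d₁ p) (hq : mdg d₂ q) :
    mdg (d₁ + d₂) (p * q) := by
  intro m hm
  classical
  rw [coeff_mul]
  refine Finset.sum_eq_zero fun x hx => ?_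
  have hxm : x.1 + x.2 = m := Finset.HasAntidiagonal.mem_antidiagonal.mp hx
  have : deg x.1 + deg x.2 < d₁ + d₂ := by rw [← deg_add, hxm]; exact hm
  rcases lt_or_ge (deg x.1) d₁ with h | h
  · rw [hp x.1 h, zero_mul]
  · rw [hq x.2 (by omega), mul_zero]

lemma mdg_add {d : ℕ} {p q : MvPolynomial (Fin 4) A} (hp : mdg d p) (hq : mdg d q) :
    mdg d (p + q) := fun m hm => by rw [coeff_add, hp m hm, hq m hm, add_zero]

lemma mdg_zero' (d : ℕ) (p : MvPolynomial (Fin 4) A) : mdg 0 p := fun m hm => by omega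

lemma sum_sgl_eq_F4_iff (i j k l : Fin 4) :
    sgl i + sgl j + sgl k + sgl l = F4 ↔
      ∀ t : Fin 4, ((if i = t then 1 else 0) + (if j = t then 1 else 0)
        + (if k = t then 1 else 0) + (if l = t then 1 else 0) : ℕ) = 1 := by
  have hF : ∀ t, F4 t = 1 := F4_apply
  rw [Finsupp.ext_iff]
  constructor <;> intro h t <;> have := h t <;>
    simpa [sgl, hF, Finsupp.single_apply] using this

set_option maxHeartbeats 1000000 in
lemma the_big_one (a : Fin 4 → A) :
    coeff F4 ((Lf a) ^ 4) = 24 * (a 0 * a 1 * a 2 * a 3) := by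
  have hL : Lf a = ∑ i, monomial (sgl i) (a i) := by rw [Lf, Fin.sum_univ_four]
  have expand : (Lf a) ^ 4
      = ∑ i, ∑ j, ∑ k, ∑ l, monomial (sgl l + sgl k + sgl j + sgl i)
          (a l * a k * a j * a i) := by
    rw [show (Lf a)^4 = Lf a * Lf a * Lf a * Lf a by ring, hL]
    simp only [Finset.sum_mul, Finset.mul_sum, monomial_mul]
  rw [expand]
  simp only [coeff_sum, coeff_monomial, sum_sgl_eq_F4_iff]
  simp (config := { decide := true }) only [Fin.sum_univ_four, if_true, if_false]
  ring

lemma mdg_one_of_coeff_zero {u : MvPolynomial (Fin 4) A} (h0 : coeff 0 u = 0) : mdg 1 u := by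
  intro m hm
  rw [deg_eq_zero (by omega : deg m = 0)]
  exact h0

lemma mdg_four_pow {u : MvPolynomial (Fin 4) A} (h0 : coeff 0 u = 0) : mdg 4 (u ^ 4) := by
  have h1 : mdg 1 u := mdg_one_of_coeff_zero h0
  have := mdg_mul h1 (mdg_mul h1 (mdg_mul h1 h1))
  rwa [show u * (u * (u * u)) = u ^ 4 by ring] at this

/-- The key interaction coefficient computation. -/
lemma coeff_F4_pow4 {u : MvPolynomial (Fin 4) A} (h0 : coeff 0 u = 0) :
    coeff F4 (u ^ 4) = 24 * (coeff (sgl 0) u * coeff (sgl 1) u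
      * coeff (sgl 2) u * coeff (sgl 3) u) := by
  set a : Fin 4 → A := fun i => coeff (sgl i) u with ha
  set L := Lf a with hLdef
  set R := u - L with hRdef
  have hL1 : mdg 1 L := by
    intro m hm
    exact coeff_Lf_of_deg_ne_one a (by omega)
  have hR2 : mdg 2 R := by
    intro m hm
    interval_cases hd : deg m
    · rw [deg_eq_zero hd, hRdef, coeff_sub, h0, coeff_Lf_of_deg_ne_one a (by rw [deg_zero]; omega),
        sub_zero]
    · obtain ⟨i, rfl⟩ := deg_one_eq_sgl hd
      rw [hRdef, coeff_sub, coeff_sgl_Lf, ha, sub_self]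
  have hG3 : mdg 3 (4*(L*(L*L)) + (6*(L*(L*R)) + (4*(L*(R*R)) + R*(R*R)))) := by
    refine mdg_add ?_ (mdg_add ?_ (mdg_add ?_ ?_))
    · exact mdg_mul (mdg_zero' 0 _) (mdg_mul hL1 (mdg_mul hL1 hL1))
    · have := mdg_mul (mdg_zero' 0 (6 : MvPolynomial (Fin 4) A))
        (mdg_mul hL1 (mdg_mul hL1 hR2))
      exact fun m hm => this m (by omega)
    · have := mdg_mul (mdg_zero' 0 (4 : MvPolynomial (Fin 4) A))
        (mdg_mul hL1 (mdg_mul hR2 hR2))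
      exact fun m hm => this m (by omega)
    · have := mdg_mul hR2 (mdg_mul hR2 hR2)
      exact fun m hm => this m (by omega)
  have hsplit : u ^ 4 = L ^ 4
      + R * (4*(L*(L*L)) + (6*(L*(L*R)) + (4*(L*(R*R)) + R*(R*R)))) := by
    rw [show u = L + R by rw [hRdef]; ring]
    ring
  have h5 : mdg 5 (R * (4*(L*(L*L)) + (6*(L*(L*R)) + (4*(L*(R*R)) + R*(R*R))))) :=
    mdg_mul hR2 hG3
  rw [hsplit, coeff_add, h5 F4 (by rw [deg_F4]; omega), add_zero, the_big_one]

end QFPAux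

open QFPAux in
/-- In `A[ε₁,ε₂,ε₃,ε₄]/(ε₁²,ε₂²,ε₃²,ε₄²)` there is a unique `u` in the ideal `(ε₁,…,ε₄)`
with `u = v − Q(c·u⁴)`, where `v = ε₁v₁+ε₂v₂+ε₃v₃+ε₄v₄`; its `ε₁ε₂ε₃ε₄`-coefficient is
`−24·Q(c·v₁v₂v₃v₄)`. We work with the reduced (square-free) representatives. -/
theorem quartic_fixed_point_interaction_coeff
    (A : Type*) [CommRing A] [Algebra ℝ A] (Q : A →ₗ[ℝ] A) (c v₁ v₂ v₃ v₄ : A) :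
    (∃! u : MvPolynomial (Fin 4) A,
        (∀ i : Fin 4, degreeOf i u ≤ 1) ∧ coeff 0 u = 0 ∧
        u - ((X 0 * C v₁ + X 1 * C v₂ + X 2 * C v₃ + X 3 * C v₄) - Qext Q (C c * u ^ 4))
          ∈ Ideal.span (Set.range fun i : Fin 4 => (X i : MvPolynomial (Fin 4) A) ^ 2)) ∧
      (∀ u : MvPolynomial (Fin 4) A,
        (∀ i : Fin 4, degreeOf i u ≤ 1) → coeff 0 u = 0 →
        u - ((X 0 * C v₁ + X 1 * C v₂ + X 2 * C v₃ + X 3 * C v₄) - Qext Q (C c * u ^ 4))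
          ∈ Ideal.span (Set.range fun i : Fin 4 => (X i : MvPolynomial (Fin 4) A) ^ 2) →
        coeff (Finsupp.single 0 1 + Finsupp.single 1 1 +
            Finsupp.single 2 1 + Finsupp.single 3 1) u
          = -(24 : A) * Q (c * (v₁ * v₂ * v₃ * v₄))) := by
  classical
  set vv : Fin 4 → A := ![v₁, v₂, v₃, v₄] with hvv
  set V : MvPolynomial (Fin 4) A := X 0 * C v₁ + X 1 * C v₂ + X 2 * C v₃ + X 3 * C v₄ with hVdef
  have hV : V = Lf vv := by
    rw [hVdef, Lf]
    have : ∀ (i : Fin 4) (v : A), (X i : MvPolynomial (Fin 4) A) * C v = monomial (sgl i) v := by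
      intro i v
      rw [X, C_apply, monomial_mul]
      simp [sgl]
    rw [this 0 v₁, this 1 v₂, this 2 v₃, this 3 v₄]
    simp [hvv]
  set w : A := Q (c * (24 * (v₁ * v₂ * v₃ * v₄))) with hw
  set u₀ : MvPolynomial (Fin 4) A := Lf vv - monomial F4 w with hu₀
  -- coefficients of u₀
  have hu₀0 : coeff 0 u₀ = 0 := by
    rw [hu₀, coeff_sub, coeff_Lf_of_deg_ne_one vv (by rw [deg_zero]; omega), coeff_monomial,
      if_neg F4_ne_zero, sub_zero]
  have hu₀s : ∀ i, coeff (sgl i) u₀ = vv i := by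
    intro i
    rw [hu₀, coeff_sub, coeff_sgl_Lf, coeff_monomial, if_neg (fun h => sgl_ne_F4 i h.symm),
      sub_zero]
  have hu₀F : coeff F4 u₀ = -w := by
    rw [hu₀, coeff_sub, coeff_Lf_of_deg_ne_one vv (by rw [deg_F4]; omega), coeff_monomial,
      if_pos rfl, zero_sub]
  have hu₀mid : ∀ m : Fin 4 →₀ ℕ, deg m ≠ 1 → m ≠ F4 → coeff m u₀ = 0 := by
    intro m h1 hF
    rw [hu₀, coeff_sub, coeff_Lf_of_deg_ne_one vv h1, coeff_monomial,
      if_neg (fun h => hF h.symm), zero_sub, neg_eq_zero]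
  have hu₀SF : ∀ i : Fin 4, degreeOf i u₀ ≤ 1 := by
    intro i
    rw [degreeOf_le_iff]
    intro m hm
    have hne := MvPolynomial.mem_support_iff.mp hm
    by_cases h1 : deg m = 1
    · obtain ⟨j, rfl⟩ := deg_one_eq_sgl h1
      rw [sgl_apply]; split <;> omega
    · by_cases hF : m = F4
      · rw [hF, F4_apply]
      · exact absurd (hu₀mid m h1 hF) hne
  -- characterization of the ideal-membership condition, coefficientwise
  have cond_iff : ∀ u : MvPolynomial (Fin 4) A,
      (u - (V - Qext Q (C c * u ^ 4))
          ∈ Ideal.span (Set.range fun i : Fin 4 => (X i : MvPolynomial (Fin 4) A) ^ 2))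
        ↔ ∀ m : Fin 4 →₀ ℕ, (∀ i, m i ≤ 1) →
            coeff m u = coeff m V - Q (c * coeff m (u ^ 4)) := by
    intro u
    rw [mem_span_sq_iff]
    refine forall_congr' fun m => imp_congr Iff.rfl ?_
    rw [coeff_sub, coeff_sub, coeff_Qext, coeff_C_mul, sub_eq_zero]
  -- any solution has the same squarefree coefficients as u₀
  have sol_coeff : ∀ u : MvPolynomial (Fin 4) A, coeff 0 u = 0 →
      (∀ m : Fin 4 →₀ ℕ, (∀ i, m i ≤ 1) →
        coeff m u = coeff m V - Q (c * coeff m (u ^ 4))) →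
      ∀ m : Fin 4 →₀ ℕ, (∀ i, m i ≤ 1) → coeff m u = coeff m u₀ := by
    intro u h0 hP m hm
    have hlin : ∀ i, coeff (sgl i) u = vv i := by
      intro i
      rw [hP (sgl i) (fun j => by rw [sgl_apply]; split <;> omega), hV, coeff_sgl_Lf,
        mdg_four_pow h0 (sgl i) (by rw [deg_sgl]; omega), mul_zero, map_zero, sub_zero]
    have hdeg := SF_deg_le hm
    interval_cases hd : deg m
    · obtain rfl := deg_eq_zero hd
      rw [h0, hu₀0]
    · obtain ⟨i, rfl⟩ := deg_one_eq_sgl hd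
      rw [hlin i, hu₀s i]
    · rw [hP m hm, hV, coeff_Lf_of_deg_ne_one vv (by omega),
        mdg_four_pow h0 m (by omega), mul_zero, map_zero, sub_zero,
        hu₀mid m (by omega) (fun h => by rw [h, deg_F4] at hd; omega)]
    · rw [hP m hm, hV, coeff_Lf_of_deg_ne_one vv (by omega),
        mdg_four_pow h0 m (by omega), mul_zero, map_zero, sub_zero,
        hu₀mid m (by omega) (fun h => by rw [h, deg_F4] at hd; omega)]
    · obtain rfl := SF_deg_four hm hd
      rw [hP F4 (fun j => (F4_apply j).le), hV,
        coeff_Lf_of_deg_ne_one vv (by rw [deg_F4]; omega), coeff_F4_pow4 h0,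
        hlin 0, hlin 1, hlin 2, hlin 3, hu₀F, hw, zero_sub, hvv]
      simp
  -- u₀ satisfies the fixed-point equation
  have hu₀P : ∀ m : Fin 4 →₀ ℕ, (∀ i, m i ≤ 1) →
      coeff m u₀ = coeff m V - Q (c * coeff m (u₀ ^ 4)) := by
    intro m hm
    have hdeg := SF_deg_le hm
    interval_cases hd : deg m
    · obtain rfl := deg_eq_zero hd
      rw [hu₀0, hV, coeff_Lf_of_deg_ne_one vv (by rw [deg_zero]; omega),
        mdg_four_pow hu₀0 0 (by rw [deg_zero]; omega), mul_zero, map_zero, sub_zero]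
    · obtain ⟨i, rfl⟩ := deg_one_eq_sgl hd
      rw [hu₀s i, hV, coeff_sgl_Lf,
        mdg_four_pow hu₀0 (sgl i) (by rw [deg_sgl]; omega), mul_zero, map_zero, sub_zero]
    · rw [hu₀mid m (by omega) (fun h => by rw [h, deg_F4] at hd; omega), hV,
        coeff_Lf_of_deg_ne_one vv (by omega),
        mdg_four_pow hu₀0 m (by omega), mul_zero, map_zero, sub_zero]
    · rw [hu₀mid m (by omega) (fun h => by rw [h, deg_F4] at hd; omega), hV,
        coeff_Lf_of_deg_ne_one vv (by omega),
        mdg_four_pow hu₀0 m (by omega), mul_zero, map_zero, sub_zero]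
    · obtain rfl := SF_deg_four hm hd
      rw [hu₀F, hV, coeff_Lf_of_deg_ne_one vv (by rw [deg_F4]; omega),
        coeff_F4_pow4 hu₀0, hu₀s 0, hu₀s 1, hu₀s 2, hu₀s 3, hw, zero_sub, hvv]
      simp
  -- coefficients of any solution at non-squarefree monomials vanish
  have nonSF : ∀ u : MvPolynomial (Fin 4) A, (∀ i : Fin 4, degreeOf i u ≤ 1) →
      ∀ m : Fin 4 →₀ ℕ, ¬ (∀ i, m i ≤ 1) → coeff m u = 0 := by
    intro u hSF m hm
    by_contra hne
    push_neg at hm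
    obtain ⟨i, hi⟩ := hm
    have := degreeOf_le_iff.mp (hSF i) m (MvPolynomial.mem_support_iff.mpr hne)
    omega
  have uniq : ∀ u : MvPolynomial (Fin 4) A,
      (∀ i : Fin 4, degreeOf i u ≤ 1) → coeff 0 u = 0 →
      (u - (V - Qext Q (C c * u ^ 4))
          ∈ Ideal.span (Set.range fun i : Fin 4 => (X i : MvPolynomial (Fin 4) A) ^ 2)) →
      u = u₀ := by
    intro u hSF h0 hmem
    apply MvPolynomial.ext
    intro m
    by_cases hm : ∀ i, m i ≤ 1
    · exact sol_coeff u h0 ((cond_iff u).mp hmem) m hm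
    · rw [nonSF u hSF m hm, nonSF u₀ hu₀SF m hm]
  have hF4eq : (Finsupp.single 0 1 + Finsupp.single 1 1 +
      Finsupp.single 2 1 + Finsupp.single 3 1 : Fin 4 →₀ ℕ) = F4 := rfl
  have final : -w = -(24 : A) * Q (c * (v₁ * v₂ * v₃ * v₄)) := by
    rw [hw, show c * (24 * (v₁ * v₂ * v₃ * v₄))
        = (24 : ℕ) • (c * (v₁ * v₂ * v₃ * v₄)) by simp [nsmul_eq_mul]; ring]
    rw [map_nsmul, nsmul_eq_mul]
    push_cast
    ring
  constructor
  · exact ⟨u₀, ⟨hu₀SF, hu₀0, (cond_iff u₀).mpr hu₀P⟩,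
      fun u hu => uniq u hu.1 hu.2.1 hu.2.2⟩
  · intro u hSF h0 hmem
    rw [hF4eq, uniq u hSF h0 hmem, hu₀F, final]
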